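/- For every odd natural number N ≥ 1 and every family of real angles θ_1, …, θ_N, the product of sines satisfies ∏_{k=1}^N sin(θ_k) = ((−1)^{(N−1)/2} / 2^N) · ∑_{e ∈ {−1,1}^N} (∏_{j=1}^N e_j) · sin(e_1 θ_1 + ⋯ + e_N θ_N). -/

import Mathlib

open Complex Finset

private lemma sin_eq_sum_signs (z : ℂ) :
    Complex.sin z =
      ∑ e ∈ ({-1, 1} : Finset ℝ), (e : ℂ) * Complex.exp ((e : ℂ) * z * Complex.I) / (2 * Complex.I) := by
  rw [Finset.sum_pair (by norm_num : (-1 : ℝ) ≠ 1)]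
  push_cast
  rw [Complex.sin]
  rw [← add_div, div_eq_div_iff (by norm_num) (by simp [Complex.I_ne_zero])]
  ring_nf
  rw [Complex.I_sq]
  ring

private lemma sum_neg_signs {N : ℕ} (F : (Fin N → ℝ) → ℂ) :
    ∑ e ∈ Fintype.piFinset (fun _ : Fin N => ({-1, 1} : Finset ℝ)), F e =
    ∑ e ∈ Fintype.piFinset (fun _ : Fin N => ({-1, 1} : Finset ℝ)), F (fun i => -(e i)) := by
  apply Finset.sum_nbij' (fun e => fun i => -(e i)) (fun e => fun i => -(e i))
  · intro e he
    simp only [Fintype.mem_piFinset, Finset.mem_insert, Finset.mem_singleton] at he ⊢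
    intro i; rcases he i with h | h <;> simp [h]
  · intro e he
    simp only [Fintype.mem_piFinset, Finset.mem_insert, Finset.mem_singleton] at he ⊢
    intro i; rcases he i with h | h <;> simp [h]
  · intro e he; funext i; simp
  · intro e he; funext i; simp
  · intro e he; simp

/-- Generalized product-to-sum (Werner) formula for an odd number of sines: for odd `N ≥ 1`,
`∏ sin θ_k = ((-1)^((N-1)/2) / 2^N) ∑_{e ∈ {-1,1}^N} (∏ e_j) sin (∑ e_i θ_i)`. -/
theorem prod_sin_eq_sum_over_signs_odd (N : ℕ) (hN : 1 ≤ N) (hOdd : Odd N)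
    (θ : Fin N → ℝ) :
    ∏ k, Real.sin (θ k) =
      ((-1 : ℝ) ^ ((N - 1) / 2) / 2 ^ N) *
        ∑ e ∈ Fintype.piFinset (fun _ : Fin N => ({-1, 1} : Finset ℝ)),
          (∏ j, e j) * Real.sin (∑ i, e i * θ i) := by
  obtain ⟨m, hm⟩ := hOdd
  have hm2 : (N - 1) / 2 = m := by omega
  apply Complex.ofReal_injective
  push_cast
  set P := Fintype.piFinset (fun _ : Fin N => ({-1, 1} : Finset ℝ)) with hP
  set A : ℂ := ∑ e ∈ P, (∏ j, (e j : ℂ)) * Complex.exp ((∑ i, (e i : ℂ) * (θ i : ℂ)) * Complex.I) with hA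
  have key1 : ∏ k, Complex.sin (θ k : ℂ) = A / (2 * Complex.I) ^ N := by
    have h1 : ∀ k : Fin N, Complex.sin (θ k : ℂ) =
        ∑ e ∈ ({-1, 1} : Finset ℝ), (e : ℂ) * Complex.exp ((e : ℂ) * (θ k : ℂ) * Complex.I) / (2 * Complex.I) :=
      fun k => sin_eq_sum_signs _
    rw [Finset.prod_congr rfl (fun k _ => h1 k), Finset.prod_univ_sum]
    rw [hA, Finset.sum_div]
    apply Finset.sum_congr rfl
    intro e he
    rw [Finset.prod_div_distrib, Finset.prod_mul_distrib, Finset.prod_const,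
      Finset.card_univ, Fintype.card_fin, ← Complex.exp_sum]
    congr 2
    rw [Finset.sum_mul]
  have key2 : ∑ e ∈ P, (∏ j, (e j : ℂ)) * Complex.sin (∑ i, (e i : ℂ) * (θ i : ℂ)) =
      -Complex.I * A := by
    have expand : ∀ e : Fin N → ℝ,
        (∏ j, (e j : ℂ)) * Complex.sin (∑ i, (e i : ℂ) * (θ i : ℂ)) =
        ((∏ j, (e j : ℂ)) * Complex.exp (-((∑ i, (e i : ℂ) * (θ i : ℂ)) * Complex.I))
          - (∏ j, (e j : ℂ)) * Complex.exp ((∑ i, (e i : ℂ) * (θ i : ℂ)) * Complex.I)) * Complex.I / 2 := by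
      intro e
      rw [Complex.sin]
      ring_nf
    rw [Finset.sum_congr rfl (fun e _ => expand e)]
    rw [← Finset.sum_div, ← Finset.sum_mul, Finset.sum_sub_distrib]
    have hneg : ∑ e ∈ P, (∏ j, (e j : ℂ)) * Complex.exp (-((∑ i, (e i : ℂ) * (θ i : ℂ)) * Complex.I)) = -A := by
      rw [hA, ← Finset.sum_neg_distrib]
      rw [sum_neg_signs (fun e => (∏ j, (e j : ℂ)) * Complex.exp (-((∑ i, (e i : ℂ) * (θ i : ℂ)) * Complex.I)))]
      apply Finset.sum_congr rfl
      intro e he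
      push_cast
      have h1 : (∏ j, -(e j : ℂ)) = -∏ j, (e j : ℂ) := by
        have : ∀ j : Fin N, -(e j : ℂ) = (-1) * (e j : ℂ) := fun j => by ring
        rw [Finset.prod_congr rfl (fun j _ => this j), Finset.prod_mul_distrib,
          Finset.prod_const, Finset.card_univ, Fintype.card_fin,
          Odd.neg_one_pow ⟨m, hm⟩]
        ring
      rw [h1]
      have h2 : (∑ i, -(e i : ℂ) * (θ i : ℂ)) = -∑ i, (e i : ℂ) * (θ i : ℂ) := by
        rw [← Finset.sum_neg_distrib]; ring_nf
      rw [h2]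
      ring_nf
    rw [hneg]
    ring
  rw [key1, key2, hm2]
  have hIN : Complex.I ^ N = (-1 : ℂ) ^ m * Complex.I := by
    rw [hm, pow_succ, pow_mul, Complex.I_sq]
  have hI : (2 * Complex.I) ^ N = 2 ^ N * (-1 : ℂ) ^ m * Complex.I := by
    rw [mul_pow, hIN]; ring
  have h2 : (2 : ℂ) ^ N ≠ 0 := pow_ne_zero _ two_ne_zero
  have hne : (2 * Complex.I) ^ N ≠ 0 :=
    pow_ne_zero _ (mul_ne_zero two_ne_zero Complex.I_ne_zero)
  have e1 : ((-1 : ℂ)) ^ m * (-1 : ℂ) ^ m = 1 := by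
    rw [← pow_add, ← two_mul, pow_mul]; norm_num
  rw [div_eq_iff hne, hI]
  have hrw : ((-1 : ℂ)) ^ m / 2 ^ N * (-Complex.I * A) * (2 ^ N * (-1 : ℂ) ^ m * Complex.I) =
      A * ((-1 : ℂ) ^ m * (-1 : ℂ) ^ m) * (-(Complex.I * Complex.I)) * (2 ^ N / 2 ^ N) := by
    ring
  rw [hrw, e1, div_self h2, Complex.I_mul_I]
  ring
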